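/- Consider a loop with trip count TC partially unrolled with factor UF, 1 ≤ UF ≤ TC, and executed in a non-pipelined fashion, where the UF-fold replicated loop body L′ contains an embedded copy of the single loop body L (an injective map preserving dependence edges, latencies and operation types). Let D ∈ ℕ be the latency lower bound LB(L) of the single body L (the maximum of its latency-weighted critical path and its per-type work bounds ⌈(∑ lat)/R o⌉ under resource bounds R). If the n = ⌊TC / UF⌋ groups are executed sequentially, each group being a schedule of L′ respecting its dependences and the resource constraint R, then the total latency is at least ⌊TC / UF⌋ × D. -/

import Mathlib

/-- `IsChainOn E v` says that `v 0, v 1, …, v k` is a dependence chain for the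
dependence relation `E`. -/
def IsChainOn {V : Type*} (E : V → V → Prop) {k : ℕ} (v : Fin (k + 1) → V) : Prop :=
  ∀ i : Fin k, E (v i.castSucc) (v i.succ)

/-- The latency lower bound `LB` of a finite operation set `(V, E, lat, typ)`
under resource bounds `R` : the maximum of (a) the supremum, over all
dependence chains, of the sum of the latencies along the chain, and (b) the
maximum over operation types `o` of `⌈(∑_{typ v = o} lat v) / R o⌉`
(valued in `ℕ∞` so that the supremum over chains always exists). -/
noncomputable def latLB {V Op : Type*} [Fintype V] [Fintype Op] [DecidableEq Op]
    (E : V → V → Prop) (lat : V → ℕ) (typ : V → Op) (R : Op → ℕ) : ℕ∞ :=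
  max
    (⨆ (k : ℕ) (v : Fin (k + 1) → V) (_ : IsChainOn E v), ((∑ i, lat (v i) : ℕ) : ℕ∞))
    ((Finset.univ.sup fun o : Op =>
        ((∑ v ∈ Finset.univ.filter (fun v => typ v = o), lat v) + R o - 1) / R o : ℕ) : ℕ∞)

/-- **Minimal latency of a partially unrolled loop with factor UF and complex
loop bodies.**  A loop of trip count `TC` is partially unrolled with factor
`UF` (`1 ≤ UF ≤ TC`) and executed non-pipelined: its `n = ⌊TC / UF⌋` complete
groups run sequentially, each group `g` being a schedule `start g` of the
`UF`-fold replicated body `L' = (V', E', lat', typ')` that respects the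
dependences `E'`, satisfies the resource constraint `R`, and is contained in
the interval `[s g, e g)`.  The single loop body `L = (V, E, lat, typ)` embeds
into `L'` via an injective map `φ` preserving dependence edges, latencies and
types, and `D` is the latency lower bound `LB(L)`.  Then the total latency is
at least `⌊TC / UF⌋ * D`. -/
lemma chain_aux {V' : Type*} (E' : V' → V' → Prop) (lat' : V' → ℕ) (st : V' → ℕ)
    (h : ∀ v w, E' v w → st v + lat' v ≤ st w) :
    ∀ k (w : Fin (k + 1) → V'), IsChainOn E' w →
      st (w 0) + ∑ i, lat' (w i) ≤ st (w (Fin.last k)) + lat' (w (Fin.last k)) := by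
  intro k
  induction k with
  | zero =>
    intro w _
    simp [Fin.last]
  | succ k ih =>
    intro w hw
    have hw' : IsChainOn E' (fun i => w i.succ) := by
      intro i
      have := hw i.succ
      rw [← Fin.succ_castSucc] at this
      exact this
    have h1 := ih (fun i => w i.succ) hw'
    have h0 := h _ _ (hw 0)
    simp only [Fin.succ_last, Nat.succ_eq_add_one] at h1
    rw [Fin.sum_univ_succ]
    simp only [Fin.castSucc_zero] at h0
    omega

theorem partially_unrolled_complex_body_latency_lower_bound
    {V V' Op : Type*} [Fintype V] [Fintype V'] [Fintype Op] [DecidableEq Op]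
    (E : V → V → Prop) (E' : V' → V' → Prop)
    (lat : V → ℕ) (lat' : V' → ℕ) (typ : V → Op) (typ' : V' → Op)
    (hlat : ∀ v, 1 ≤ lat v) (hlat' : ∀ v', 1 ≤ lat' v')
    (φ : V → V') (hφinj : Function.Injective φ)
    (hφE : ∀ v w, E v w → E' (φ v) (φ w))
    (hφlat : ∀ v, lat' (φ v) = lat v)
    (hφtyp : ∀ v, typ' (φ v) = typ v)
    (R : Op → ℕ) (hR : ∀ o, 1 ≤ R o)
    (TC UF : ℕ) (hUF : 1 ≤ UF) (hUFTC : UF ≤ TC)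
    (D : ℕ) (hD : (D : ℕ∞) = latLB E lat typ R)
    (s e : ℕ → ℕ) (start : ℕ → V' → ℕ)
    (hcontain : ∀ g < TC / UF, ∀ v' : V',
      s g ≤ start g v' ∧ start g v' + lat' v' ≤ e g)
    (hresp : ∀ g < TC / UF, ∀ v w, E' v w → start g v + lat' v ≤ start g w)
    (hres : ∀ g < TC / UF, ∀ t o,
      ((Finset.univ.filter
          (fun v' => typ' v' = o ∧ start g v' ≤ t ∧ t < start g v' + lat' v')).card) ≤ R o)
    (hseq : ∀ g, g + 1 < TC / UF → e g ≤ s (g + 1)) :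
    TC / UF * D ≤ e (TC / UF - 1) - s 0 := by
  -- per-group bound
  have hstep : ∀ g < TC / UF, D ≤ e g - s g := by
    intro g hg
    -- chain bound
    have hchain : ∀ (k : ℕ) (v : Fin (k + 1) → V), IsChainOn E v →
        ∑ i, lat (v i) ≤ e g - s g := by
      intro k v hv
      have hw : IsChainOn E' (fun i => φ (v i)) := fun i => hφE _ _ (hv i)
      have h1 := chain_aux E' lat' (start g) (hresp g hg) k (fun i => φ (v i)) hw
      have h2 := (hcontain g hg (φ (v (Fin.last k)))).2
      have h3 := (hcontain g hg (φ (v 0))).1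
      have h4 : ∑ i, lat' (φ (v i)) = ∑ i, lat (v i) := by
        simp [hφlat]
      omega
    -- resource bound
    have hwork : ∀ o : Op,
        ((∑ v ∈ Finset.univ.filter (fun v => typ v = o), lat v) + R o - 1) / R o
          ≤ e g - s g := by
      intro o
      set S := Finset.univ.filter (fun v : V => typ v = o) with hS
      have harea : ∑ v ∈ S, lat v ≤ (e g - s g) * R o := by
        have hcard : ∀ v ∈ S, lat v =
            ((Finset.Ico (s g) (e g)).filter
              (fun t => start g (φ v) ≤ t ∧ t < start g (φ v) + lat' (φ v))).card := by
          intro v _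
          have heq : (Finset.Ico (s g) (e g)).filter
              (fun t => start g (φ v) ≤ t ∧ t < start g (φ v) + lat' (φ v))
              = Finset.Ico (start g (φ v)) (start g (φ v) + lat' (φ v)) := by
            ext t
            have h1 := (hcontain g hg (φ v)).1
            have h2 := (hcontain g hg (φ v)).2
            simp only [Finset.mem_filter, Finset.mem_Ico]
            omega
          rw [heq, Nat.card_Ico, hφlat]
          omega
        calc ∑ v ∈ S, lat v
            = ∑ v ∈ S, ∑ t ∈ Finset.Ico (s g) (e g),
                (if start g (φ v) ≤ t ∧ t < start g (φ v) + lat' (φ v) then 1 else 0) := by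
              refine Finset.sum_congr rfl fun v hv => ?_
              rw [hcard v hv, Finset.card_filter]
          _ = ∑ t ∈ Finset.Ico (s g) (e g), ∑ v ∈ S,
                (if start g (φ v) ≤ t ∧ t < start g (φ v) + lat' (φ v) then 1 else 0) :=
              Finset.sum_comm
          _ ≤ ∑ _t ∈ Finset.Ico (s g) (e g), R o := by
              refine Finset.sum_le_sum fun t _ => ?_
              rw [← Finset.card_filter]
              calc (S.filter (fun v => start g (φ v) ≤ t ∧ t < start g (φ v) + lat' (φ v))).card
                  ≤ (Finset.univ.filter
                      (fun v' => typ' v' = o ∧ start g v' ≤ t ∧ t < start g v' + lat' v')).card := by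
                    apply Finset.card_le_card_of_injOn φ
                    · intro v hv
                      simp only [hS, Finset.mem_coe, Finset.mem_filter, Finset.mem_univ, true_and] at hv ⊢
                      rw [hφtyp]
                      exact ⟨hv.1, hv.2⟩
                    · exact hφinj.injOn
                _ ≤ R o := hres g hg t o
          _ = (e g - s g) * R o := by
              rw [Finset.sum_const, Nat.card_Ico, smul_eq_mul, mul_comm]
      have hRo := hR o
      rw [Nat.div_le_iff_le_mul_add_pred (by omega)]
      have : (e g - s g) * R o = R o * (e g - s g) := mul_comm _ _
      omega
    -- combine via latLB
    have hle : (D : ℕ∞) ≤ ((e g - s g : ℕ) : ℕ∞) := by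
      rw [hD, latLB]
      apply max_le
      · exact iSup_le fun k => iSup_le fun v => iSup_le fun hv =>
          Nat.cast_le.mpr (hchain k v hv)
      · exact Nat.cast_le.mpr (Finset.sup_le fun o _ => hwork o)
    exact_mod_cast hle
  rcases Nat.eq_zero_or_pos D with hD0 | hD1
  · simp [hD0]
  have hn : 1 ≤ TC / UF := (Nat.one_le_div_iff (by omega)).mpr hUFTC
  have hstep' : ∀ g < TC / UF, s g + D ≤ e g := by
    intro g hg
    have := hstep g hg
    omega
  have claim : ∀ g, g < TC / UF → s 0 + (g + 1) * D ≤ e g := by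
    intro g
    induction g with
    | zero =>
      intro h
      have := hstep' 0 h
      omega
    | succ g ih =>
      intro h
      have h1 : g < TC / UF := by omega
      have h2 := ih h1
      have h3 := hseq g h
      have h4 := hstep' (g + 1) h
      have h5 : (g + 1 + 1) * D = (g + 1) * D + D := by ring
      omega
  have hfin := claim (TC / UF - 1) (by omega)
  have : TC / UF - 1 + 1 = TC / UF := by omega
  rw [this] at hfin
  omega
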